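/- Conversely, every partition in NC(m;c) having the vertical no-repeat property with respect to c is a maximal element of the poset (NC(m;c), ≪). -/
import Mathlib


open Finset

/-- Partitions of `{1,...,n}`, modelled as finpartitions of `Fin n`. -/
abbrev NCPart (n : ℕ) := Finpartition (Finset.univ : Finset (Fin n))

/-- `i` and `j` lie in the same block of `π`. -/
def SameBlock {n : ℕ} (π : NCPart n) (i j : Fin n) : Prop :=
  ∃ B ∈ π.parts, i ∈ B ∧ j ∈ B

/-- `π` is a non-crossing partition. -/
def IsNoncrossing {n : ℕ} (π : NCPart n) : Prop :=
  ∀ i1 i2 i3 i4 : Fin n, i1 < i2 → i2 < i3 → i3 < i4 →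
    SameBlock π i1 i3 → SameBlock π i2 i4 → SameBlock π i1 i2

/-- `π` is an interval partition: every block is an integer interval. -/
def IsIntervalPart {n : ℕ} (π : NCPart n) : Prop :=
  ∀ B ∈ π.parts, ∃ i j : Fin n, i ≤ j ∧ B = Finset.Icc i j

/-- The nesting order: `V ⊑ W` iff `min W ≤ min V` and `max V ≤ max W`. -/
def Nested {n : ℕ} (V W : Finset (Fin n)) : Prop :=
  W.min ≤ V.min ∧ V.max ≤ W.max

def StrictNested {n : ℕ} (V W : Finset (Fin n)) : Prop :=
  Nested V W ∧ V ≠ W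

/-- An outer block: a block maximal with respect to the nesting order. -/
def IsOuter {n : ℕ} (π : NCPart n) (W : Finset (Fin n)) : Prop :=
  W ∈ π.parts ∧ ∀ V ∈ π.parts, Nested W V → V = W

/-- `P` is the parent block of `V` in `π`. -/
def IsParent {n : ℕ} (π : NCPart n) (V P : Finset (Fin n)) : Prop :=
  P ∈ π.parts ∧ StrictNested V P ∧
    ¬ ∃ V' ∈ π.parts, StrictNested V V' ∧ StrictNested V' P

/-- `π` refines `ρ`: every block of `ρ` is a union of blocks of `π`. -/
def Refines {n : ℕ} (π ρ : NCPart n) : Prop :=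
  ∀ B ∈ π.parts, ∃ C ∈ ρ.parts, B ⊆ C

/-- The partial order `π ≪ ρ`. -/
def LL {n : ℕ} (π ρ : NCPart n) : Prop :=
  Refines π ρ ∧ ∀ W ∈ ρ.parts, ∃ V ∈ π.parts, V ⊆ W ∧ V.min = W.min ∧ V.max = W.max

/-- The colouring `c` is constant on every block of `π`. -/
def MonoChrome {n s : ℕ} (c : Fin n → Fin s) (π : NCPart n) : Prop :=
  ∀ B ∈ π.parts, ∀ i ∈ B, ∀ j ∈ B, c i = c j

/-- Vertical no-repeat property: every inner block has colour different from its parent. -/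
def VNRP {n s : ℕ} (c : Fin n → Fin s) (π : NCPart n) : Prop :=
  ∀ V P : Finset (Fin n), V ∈ π.parts → IsParent π V P →
    ∀ i ∈ V, ∀ j ∈ P, c i ≠ c j

/-- The depth of (the block of) `j` in `π`: the number of blocks strictly nesting it. -/
noncomputable def blockDepth {n : ℕ} (π : NCPart n) (j : Fin n) : ℕ :=
  Set.ncard {W : Finset (Fin n) | W ∈ π.parts ∧ ∃ B ∈ π.parts, j ∈ B ∧ StrictNested B W}

/-- `j` is the maximum of an outer block of `π`. -/
def IsOuterMax {n : ℕ} (π : NCPart n) (j : Fin n) : Prop :=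
  ∃ B, IsOuter π B ∧ j ∈ B ∧ ∀ i ∈ B, i ≤ j

/-- `j` is the minimum of an outer block of `π`. -/
def IsOuterMin {n : ℕ} (π : NCPart n) (j : Fin n) : Prop :=
  ∃ B, IsOuter π B ∧ j ∈ B ∧ ∀ i ∈ B, j ≤ i

/-- Anticommutator-friendly partitions of `{1,...,2n}` (0-indexed: odd numbers
`1,3,...,2n-1` correspond to even indices, and `2n` to index `2n-1`). -/
def ACFriendly (n : ℕ) (π : NCPart (2*n)) : Prop :=
  (∀ j : Fin (2*n), IsOuterMax π j → Even (j : ℕ) ∨ (j : ℕ) = 2*n - 1) ∧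
  (∀ j j' : Fin (2*n), Even (j : ℕ) → (j' : ℕ) = (j : ℕ) + 1 → ¬ IsOuterMax π j →
    blockDepth π j ≠ blockDepth π j')

/-- A pairing: every block has exactly two elements. -/
def IsPairing {n : ℕ} (π : NCPart n) : Prop :=
  ∀ B ∈ π.parts, B.card = 2

/-- A block-projection for `π`. -/
structure BlockProjection {n : ℕ} (π : NCPart n) where
  toFun : {B : Finset (Fin n) // B ∈ π.parts} → {B : Finset (Fin n) // B ∈ π.parts}
  idem : ∀ A, toFun (toFun A) = toFun A
  mono : ∀ A B, Nested A.val B.val → Nested (toFun A).val (toFun B).val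
  le_apply : ∀ A, Nested A.val (toFun A).val

/-- Every element of `NC(m;c)` with the vertical no-repeat property is maximal in
`(NC(m;c), ≪)`. -/
theorem maximal_of_vnrp (m s : ℕ) (c : Fin m → Fin s) (σ : NCPart m)
    (hσ : IsNoncrossing σ) (hc : MonoChrome c σ) (hv : VNRP c σ) :
    ∀ ρ : NCPart m, IsNoncrossing ρ → MonoChrome c ρ → LL σ ρ → ρ = σ := by
  classical
  intro ρ hρ hcρ hLL
  obtain ⟨href, hmm⟩ := hLL
  have key : ∀ W ∈ ρ.parts, W ∈ σ.parts := by
    intro W hW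
    obtain ⟨V, hV, hVW, hminVW, hmaxVW⟩ := hmm W hW
    by_cases hEq : W = V
    · rwa [hEq]
    exfalso
    have hVne : V.Nonempty := σ.nonempty_of_mem_parts hV
    have hWne : W.Nonempty := ρ.nonempty_of_mem_parts hW
    -- any σ-block meeting W is contained in W
    have blockSub : ∀ X ∈ σ.parts, ∀ x ∈ X, x ∈ W → X ⊆ W := by
      intro X hX x hxX hxW
      obtain ⟨C, hC, hXC⟩ := href X hX
      have : C = W := ρ.eq_of_mem_parts hC hW (hXC hxX) hxW
      exact this ▸ hXC
    -- min/max of W coincide with those of V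
    have hminW : W.min' hWne = V.min' hVne := by
      have h : (↑(W.min' hWne) : WithTop (Fin m)) = ↑(V.min' hVne) := by
        rw [Finset.coe_min', Finset.coe_min', hminVW]
      exact_mod_cast h
    have hmaxW : W.max' hWne = V.max' hVne := by
      have h : (↑(W.max' hWne) : WithBot (Fin m)) = ↑(V.max' hVne) := by
        rw [Finset.coe_max', Finset.coe_max', hmaxVW]
      exact_mod_cast h
    have hpmV : W.min' hWne ∈ V := by rw [hminW]; exact V.min'_mem hVne
    have hqmV : W.max' hWne ∈ V := by rw [hmaxW]; exact V.max'_mem hVne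
    -- the candidate set
    set S : Finset (Finset (Fin m)) :=
      σ.parts.filter (fun U => U ⊆ W ∧ U ≠ V) with hS
    have hssub : V ⊂ W := lt_of_le_of_ne hVW (fun h => hEq h.symm)
    obtain ⟨u, huW, huV⟩ := Finset.exists_of_ssubset hssub
    obtain ⟨U₀, ⟨hU₀, huU₀⟩, -⟩ := σ.existsUnique_mem (Finset.mem_univ u)
    have hU₀S : U₀ ∈ S := by
      rw [hS, Finset.mem_filter]
      exact ⟨hU₀, blockSub U₀ hU₀ u huU₀ huW, fun h => huV (h ▸ huU₀)⟩
    -- maximizing function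
    set f : Finset (Fin m) → ℕ := fun U =>
      if h : U.Nonempty then (U.max' h : ℕ) + (m - (U.min' h : ℕ)) else 0 with hf
    obtain ⟨U, hUS, hUmax⟩ := S.exists_max_image f ⟨U₀, hU₀S⟩
    rw [hS, Finset.mem_filter] at hUS
    obtain ⟨hU, hUW, hUneV⟩ := hUS
    have hUne : U.Nonempty := σ.nonempty_of_mem_parts hU
    -- U is strictly nested in V
    have sUV : StrictNested U V := by
      refine ⟨⟨?_, ?_⟩, hUneV⟩
      · rw [hminVW]; exact Finset.min_mono hUW
      · rw [hmaxVW]; exact Finset.max_mono hUW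
    -- V is the parent of U
    have hpar : IsParent σ U V := by
      refine ⟨hV, sUV, ?_⟩
      rintro ⟨V', hV', ⟨⟨h1, h2⟩, hne1⟩, ⟨⟨h3, h4⟩, hne2⟩⟩
      have hV'ne : V'.Nonempty := σ.nonempty_of_mem_parts hV'
      set a := V'.min' hV'ne with ha
      set b := V'.max' hV'ne with hb
      have haV' : a ∈ V' := V'.min'_mem hV'ne
      have hbV' : b ∈ V' := V'.max'_mem hV'ne
      set u₀ := U.min' hUne with hu₀
      have hu₀U : u₀ ∈ U := U.min'_mem hUne
      have hu₀W : u₀ ∈ W := hUW hu₀U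
      have hau : a ≤ u₀ := by
        have : (↑a : WithTop (Fin m)) ≤ ↑u₀ := by
          rw [ha, hu₀, Finset.coe_min', Finset.coe_min']; exact h1
        exact_mod_cast this
      have hub : u₀ ≤ b := by
        have h5 : (↑u₀ : WithBot (Fin m)) ≤ ↑(U.max' hUne) := by
          rw [hu₀, Finset.coe_max']
          exact Finset.le_max hu₀U
        have h6 : (↑(U.max' hUne) : WithBot (Fin m)) ≤ ↑b := by
          rw [hb, Finset.coe_max', Finset.coe_max']; exact h2
        exact_mod_cast le_trans h5 h6
      -- V' is contained in W
      have hV'W : V' ⊆ W := by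
        by_cases haW : a ∈ W
        · exact blockSub V' hV' a haV' haW
        by_cases hbW : b ∈ W
        · exact blockSub V' hV' b hbV' hbW
        exfalso
        have hpa : W.min' hWne < a := by
          have hle : W.min' hWne ≤ a := by
            have : (↑(W.min' hWne) : WithTop (Fin m)) ≤ ↑a := by
              rw [ha, Finset.coe_min', Finset.coe_min', ← hminVW]
              exact h3
            exact_mod_cast this
          exact lt_of_le_of_ne hle (fun h => haW (h ▸ W.min'_mem hWne))
        have hau' : a < u₀ := lt_of_le_of_ne hau (fun h => haW (h ▸ hu₀W))
        have hub' : u₀ < b := lt_of_le_of_ne hub (fun h => hbW (h ▸ hu₀W))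
        obtain ⟨C, hC, hV'C⟩ := href V' hV'
        have s13 : SameBlock ρ (W.min' hWne) u₀ := ⟨W, hW, W.min'_mem hWne, hu₀W⟩
        have s24 : SameBlock ρ a b := ⟨C, hC, hV'C haV', hV'C hbV'⟩
        obtain ⟨B, hB, hpB, haB⟩ := hρ (W.min' hWne) a u₀ b hpa hau' hub' s13 s24
        have : B = W := ρ.eq_of_mem_parts hB hW hpB (W.min'_mem hWne)
        exact haW (this ▸ haB)
      -- V' ∈ S, contradicting maximality of f U
      have hV'S : V' ∈ S := by
        rw [hS, Finset.mem_filter]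
        exact ⟨hV', hV'W, hne2⟩
      have hle := hUmax V' hV'S
      rw [hf] at hle
      simp only [dif_pos hUne, dif_pos hV'ne] at hle
      -- min' V' < min' U strictly (equality would force U = V')
      have hminlt : (V'.min' hV'ne : ℕ) < (U.min' hUne : ℕ) := by
        have hle2 : V'.min' hV'ne ≤ U.min' hUne := hau
        rcases lt_or_eq_of_le hle2 with h | h
        · exact h
        · have haU : a ∈ U := by rw [ha, h]; exact hu₀U
          exact absurd (σ.eq_of_mem_parts hU hV' haU haV') hne1
      have hmaxle : (U.max' hUne : ℕ) ≤ (V'.max' hV'ne : ℕ) := by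
        have : (↑(U.max' hUne) : WithBot (Fin m)) ≤ ↑(V'.max' hV'ne) := by
          rw [Finset.coe_max', Finset.coe_max']; exact h2
        exact_mod_cast this
      have h7 : (U.min' hUne : ℕ) < m := (U.min' hUne).isLt
      omega
    -- VNRP contradiction
    obtain ⟨u₁, hu₁⟩ := hUne
    have hne := hv U V hU hpar u₁ hu₁ (W.min' hWne) hpmV
    exact hne (hcρ W hW u₁ (hUW hu₁) (W.min' hWne) (W.min'_mem hWne))
  -- conclude ρ = σ
  ext B
  constructor
  · exact key B
  · intro hB
    obtain ⟨C, hC, hBC⟩ := href B hB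
    obtain ⟨x, hx⟩ := σ.nonempty_of_mem_parts hB
    have : B = C := σ.eq_of_mem_parts hB (key C hC) hx (hBC hx)
    exact this ▸ hC
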